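/- For degree-zero elements x, y of a complete free Lie algebra and any rational r, one has r(x*y)*x = x*r(y*x) and r(y*x)*(-x) = (-x)*r(x*y). -/
import Mathlib


/-- Abstract setting for a complete (free) differential graded Lie algebra over `ℚ`,
together with its completed universal enveloping algebra, exponential, the
Baker–Campbell–Hausdorff product `bch x y = log (exp x * exp y)`, the operators
`e^{ad_x}` and `(e^{ad_x}-1)/ad_x`, the bracket-length projections `proj n` and
the bracket-length filtration `F n` (elements of bracket length `≥ n`). -/
structure CFL where
  L : Type
  [lieRing : LieRing L]
  [lieAlg : LieAlgebra ℚ L]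
  /-- homogeneous component of (homological) degree `n` -/
  deg : ℤ → Submodule ℚ L
  deg_bracket : ∀ {m n : ℤ} {a b : L}, a ∈ deg m → b ∈ deg n → ⁅a, b⁆ ∈ deg (m + n)
  /-- projection onto the component of bracket length `n` -/
  proj : ℕ → (L →ₗ[ℚ] L)
  proj_zero : ∀ a : L, proj 0 a = 0
  proj_ne : ∀ {m n : ℕ}, m ≠ n → ∀ a : L, proj m (proj n a) = 0
  proj_idem : ∀ (n : ℕ) (a : L), proj n (proj n a) = proj n a
  /-- the bracket-length decomposition separates points -/
  sep : ∀ a : L, (∀ n, proj n a = 0) → a = 0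
  /-- `F n` = elements of bracket length `≥ n` -/
  F : ℕ → Submodule ℚ L
  mem_F : ∀ (n : ℕ) (a : L), a ∈ F n ↔ ∀ m < n, proj m a = 0
  /-- the completed universal enveloping algebra -/
  A : Type
  [ringA : Ring A]
  [algA : Algebra ℚ A]
  ι : L →ₗ[ℚ] A
  ι_inj : Function.Injective ι
  ι_bracket : ∀ a b : L, ι ⁅a, b⁆ = ι a * ι b - ι b * ι a
  /-- the exponential of the completed enveloping algebra -/
  exp : A → A
  exp_zero : exp 0 = 1
  exp_inj : ∀ a b : L, exp (ι a) = exp (ι b) → a = b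
  /-- one-parameter group property of `exp` -/
  exp_add_smul : ∀ (a : L) (r s : ℚ), exp (ι ((r + s) • a)) = exp (ι (r • a)) * exp (ι (s • a))
  /-- the Baker–Campbell–Hausdorff product, `bch a b = log (exp a * exp b)` -/
  bch : L → L → L
  exp_bch : ∀ a b : L, exp (ι (bch a b)) = exp (ι a) * exp (ι b)
  /-- `e^{ad_a}` -/
  expAd : L → (L →ₗ[ℚ] L)
  /-- `e^{ad_a}` is conjugation by `exp a` in the enveloping algebra -/
  expAd_conj : ∀ a z : L, ι (expAd a z) * exp (ι a) = exp (ι a) * ι z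
  /-- the operator `(e^{ad_a}-1)/ad_a` -/
  expAdInt : L → (L →ₗ[ℚ] L)
  expAdInt_spec : ∀ a z : L, ⁅a, expAdInt a z⁆ + z = expAd a z
  /-- exponential of endomorphisms (e.g. of `ad` operators) -/
  expE : Module.End ℚ L → Module.End ℚ L
  /-- BCH product of endomorphisms, `bchE f g = log (expE f ∘ expE g)` -/
  bchE : Module.End ℚ L → Module.End ℚ L → Module.End ℚ L
  expE_bchE : ∀ f g : Module.End ℚ L, expE (bchE f g) = expE f ∘ₗ expE g
  expE_ad : ∀ a : L, expE (LieAlgebra.ad ℚ L a) = expAd a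
  /-- the differential -/
  d : L →ₗ[ℚ] L
  d_sq : ∀ a : L, d (d a) = 0
  d_deg : ∀ {n : ℤ} {a : L}, a ∈ deg n → d a ∈ deg (n - 1)
  d_filt : ∀ {n : ℕ} {a : L}, a ∈ F n → d a ∈ F n
  d_leibniz : ∀ {n : ℤ} (a b : L), a ∈ deg n →
    d ⁅a, b⁆ = ⁅d a, b⁆ + ((-1 : ℚ) ^ n) • ⁅a, d b⁆

attribute [instance] CFL.lieRing CFL.lieAlg CFL.ringA CFL.algA

namespace CFL

variable (C : CFL)

/-- Maurer–Cartan elements: degree `-1` and `da + ½[a,a] = 0`. -/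
def IsMC (a : C.L) : Prop := a ∈ C.deg (-1) ∧ C.d a + (2 : ℚ)⁻¹ • ⁅a, a⁆ = 0

/-- The gauge action `x 𝒢 a = e^{ad_x}(a) - ((e^{ad_x}-1)/ad_x)(dx)`. -/
def gauge (x a : C.L) : C.L := C.expAd x a - C.expAdInt x (C.d x)

end CFL


namespace CFLAux

variable (C : CFL)

lemma exp_iota_zero : C.exp (C.ι 0) = 1 := by rw [map_zero, C.exp_zero]

lemma exp_mul_exp_neg (a : C.L) : C.exp (C.ι a) * C.exp (C.ι (-a)) = 1 := by
  have h := C.exp_add_smul a 1 (-1)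
  have h0 : ((1 : ℚ) + (-1)) • a = (0 : C.L) := by norm_num
  have h1 : (1 : ℚ) • a = a := one_smul _ _
  have h2 : ((-1 : ℚ)) • a = -a := by simp
  rw [h0, h1, h2, map_zero, C.exp_zero] at h
  exact h.symm

lemma exp_neg_mul_exp (a : C.L) : C.exp (C.ι (-a)) * C.exp (C.ι a) = 1 := by
  have := exp_mul_exp_neg C (-a)
  rwa [neg_neg] at this

lemma bch_assoc (a b c : C.L) : C.bch (C.bch a b) c = C.bch a (C.bch b c) := by
  apply C.exp_inj
  rw [C.exp_bch, C.exp_bch, C.exp_bch, C.exp_bch, mul_assoc]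

lemma bch_zero_left (a : C.L) : C.bch 0 a = a := by
  apply C.exp_inj
  rw [C.exp_bch, exp_iota_zero, one_mul]

lemma bch_zero_right (a : C.L) : C.bch a 0 = a := by
  apply C.exp_inj
  rw [C.exp_bch, exp_iota_zero, mul_one]

lemma bch_neg_right (a : C.L) : C.bch a (-a) = 0 := by
  apply C.exp_inj
  rw [C.exp_bch, exp_iota_zero, exp_mul_exp_neg]

lemma bch_neg_left (a : C.L) : C.bch (-a) a = 0 := by
  apply C.exp_inj
  rw [C.exp_bch, exp_iota_zero, exp_neg_mul_exp]

lemma bch_smul_same (r s : ℚ) (a : C.L) : C.bch (r • a) (s • a) = (r + s) • a := by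
  apply C.exp_inj
  rw [C.exp_bch, C.exp_add_smul]

/-- Conjugation in the BCH group. -/
def conj (x a : C.L) : C.L := C.bch (C.bch x a) (-x)

lemma exp_conj (x a : C.L) :
    C.exp (C.ι (conj C x a)) = C.exp (C.ι x) * C.exp (C.ι a) * C.exp (C.ι (-x)) := by
  rw [conj, C.exp_bch, C.exp_bch]

lemma conj_bch (x a b : C.L) :
    conj C x (C.bch a b) = C.bch (conj C x a) (conj C x b) := by
  apply C.exp_inj
  rw [exp_conj, C.exp_bch, C.exp_bch, exp_conj, exp_conj]
  have h := exp_neg_mul_exp C x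
  simp only [mul_assoc]
  rw [← mul_assoc (C.exp (C.ι (-x))) (C.exp (C.ι x)), h, one_mul]

lemma conj_zero (x : C.L) : conj C x 0 = 0 := by
  rw [conj, bch_zero_right, bch_neg_right]

lemma conj_neg (x a : C.L) : conj C x (-a) = -(conj C x a) := by
  have h : C.bch (conj C x (-a)) (conj C x a) = 0 := by
    rw [← conj_bch, bch_neg_left, conj_zero]
  apply C.exp_inj
  have hb := C.exp_bch (conj C x (-a)) (conj C x a)
  rw [h, exp_iota_zero] at hb
  have h2 := exp_mul_exp_neg C (conj C x a)
  calc C.exp (C.ι (conj C x (-a)))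
      = C.exp (C.ι (conj C x (-a))) * (C.exp (C.ι (conj C x a)) *
          C.exp (C.ι (-(conj C x a)))) := by rw [h2, mul_one]
    _ = (C.exp (C.ι (conj C x (-a))) * C.exp (C.ι (conj C x a))) *
          C.exp (C.ι (-(conj C x a))) := by rw [mul_assoc]
    _ = C.exp (C.ι (-(conj C x a))) := by rw [← hb, one_mul]

lemma conj_natsmul (x a : C.L) (n : ℕ) :
    conj C x ((n : ℚ) • a) = (n : ℚ) • conj C x a := by
  induction n with
  | zero => simp [conj_zero]
  | succ n ih =>
      have hsplit : ((n + 1 : ℕ) : ℚ) • a = C.bch ((n : ℚ) • a) ((1 : ℚ) • a) := by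
        rw [bch_smul_same]; push_cast; ring_nf
      rw [hsplit, conj_bch, ih, one_smul]
      nth_rewrite 2 [← one_smul ℚ (conj C x a)]
      rw [bch_smul_same]; push_cast; ring_nf

lemma conj_intsmul (x a : C.L) (n : ℤ) :
    conj C x ((n : ℚ) • a) = (n : ℚ) • conj C x a := by
  obtain ⟨m, rfl | rfl⟩ := Int.eq_nat_or_neg n
  · exact_mod_cast conj_natsmul C x a m
  · have h1 : ((-(m : ℤ) : ℤ) : ℚ) • a = -((m : ℚ) • a) := by push_cast; simp
    rw [h1, conj_neg, conj_natsmul]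
    push_cast; simp

lemma conj_ratsmul (x a : C.L) (r : ℚ) :
    conj C x (r • a) = r • conj C x a := by
  have hq : ((r.den : ℚ)) ≠ 0 := by exact_mod_cast r.den_ne_zero
  have hqr : ((r.den : ℚ)) * r = (r.num : ℚ) := by
    rw [mul_comm]
    calc r * (r.den : ℚ) = ((r.num : ℚ) / (r.den : ℚ)) * (r.den : ℚ) := by
          rw [Rat.num_div_den]
      _ = (r.num : ℚ) := div_mul_cancel₀ _ hq
  apply smul_right_injective C.L hq
  calc (r.den : ℚ) • conj C x (r • a)
      = ((r.den : ℤ) : ℚ) • conj C x (r • a) := by push_cast; ring_nf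
    _ = conj C x (((r.den : ℤ) : ℚ) • (r • a)) := (conj_intsmul C x _ _).symm
    _ = conj C x (((r.den : ℚ) * r) • a) := by push_cast; rw [smul_smul]
    _ = conj C x ((r.num : ℚ) • a) := by rw [hqr]
    _ = (r.num : ℚ) • conj C x a := conj_intsmul C x a r.num
    _ = ((r.den : ℚ) * r) • conj C x a := by rw [hqr]
    _ = (r.den : ℚ) • (r • conj C x a) := by rw [mul_smul]

end CFLAux

open CFLAux in

/-- `r(x∗y) ∗ x = x ∗ r(y∗x)` and `r(y∗x) ∗ (-x) = (-x) ∗ r(x∗y)`. -/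
theorem bch_smul_shift (C : CFL) (x y : C.L) (hx : x ∈ C.deg 0) (hy : y ∈ C.deg 0) (r : ℚ) :
    C.bch (r • C.bch x y) x = C.bch x (r • C.bch y x) ∧
    C.bch (r • C.bch y x) (-x) = C.bch (-x) (r • C.bch x y) := by
  constructor
  · -- r•(x*y) * x = x * r•(y*x)
    have hconj : conj C (-x) (C.bch x y) = C.bch y x := by
      rw [conj, neg_neg]
      rw [← bch_assoc, bch_neg_left, bch_zero_left]
    have key : conj C (-x) (r • C.bch x y) = r • C.bch y x := by
      rw [conj_ratsmul, hconj]
    rw [← key, conj, neg_neg]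
    rw [← bch_assoc, ← bch_assoc, bch_neg_right, bch_zero_left]
  · -- r•(y*x) * (-x) = (-x) * r•(x*y)
    have hconj : conj C x (C.bch y x) = C.bch x y := by
      rw [conj, bch_assoc, bch_assoc, bch_neg_right, bch_zero_right]
    have key : conj C x (r • C.bch y x) = r • C.bch x y := by
      rw [conj_ratsmul, hconj]
    rw [← key, conj]
    rw [← bch_assoc, ← bch_assoc, bch_neg_left, bch_zero_left]
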